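/- Let V be a finite set, J a multigraph on V, k an integer, and μ = ⌈(k−3)/2⌉. Let R be a finite laminar family of subsets of V and S ⊆ V with 1 ≤ |R(S)| ≤ |R(V\S)|. Assume: (i) for every inclusion-minimal member R of R(S), d_J(R∩S, R\S) ≥ μ; (ii) if R(S) has a unique maximal member R (one containing all other members of R(S)), then 2·d_J((V\R)∩S, (V\R)\S) ≥ k − 6. Then d_J(S) ≥ k − 4. -/

import Mathlib

open Finset

variable {V : Type*} [Fintype V] [DecidableEq V]

/-- `d_m(S,T)`: total multiplicity of edges of the multigraph `m` with one end in `S` and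
the other in `T` (for disjoint `S`, `T`). -/
def dBetween (m : V → V → ℕ) (S T : Finset V) : ℕ := ∑ u ∈ S, ∑ v ∈ T, m u v

/-- `d_m(S) = d_m(S, V \ S)`. -/
def degS (m : V → V → ℕ) (S : Finset V) : ℕ := dBetween m S Sᶜ

/-- A family of sets is laminar if any two members are either disjoint or nested. -/
def LaminarF (F : Finset (Finset V)) : Prop :=
  ∀ A ∈ F, ∀ B ∈ F, Disjoint A B ∨ A ⊆ B ∨ B ⊆ A

/-- `R(S)`: the members of the family `R` that overlap `S`, i.e. those `A ∈ R` with
`A ∩ S`, `A \ S` and `S \ A` all nonempty. -/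
def overlapFam (R : Finset (Finset V)) (S : Finset V) : Finset (Finset V) :=
  R.filter fun A => (A ∩ S).Nonempty ∧ (A \ S).Nonempty ∧ (S \ A).Nonempty


lemma dBetween_mono (J : V → V → ℕ) {S T S' T' : Finset V} (hS : S ⊆ S') (hT : T ⊆ T') :
    dBetween J S T ≤ dBetween J S' T' := by
  unfold dBetween
  calc ∑ u ∈ S, ∑ v ∈ T, J u v
      ≤ ∑ u ∈ S, ∑ v ∈ T', J u v :=
        Finset.sum_le_sum fun u _ => Finset.sum_le_sum_of_subset hT
    _ ≤ ∑ u ∈ S', ∑ v ∈ T', J u v := Finset.sum_le_sum_of_subset hS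

lemma two_cuts (J : V → V → ℕ) {S S1 S2 T1 T2 : Finset V}
    (h1 : S1 ⊆ S) (h2 : S2 ⊆ S) (hd : Disjoint S1 S2)
    (t1 : T1 ⊆ Sᶜ) (t2 : T2 ⊆ Sᶜ) :
    dBetween J S1 T1 + dBetween J S2 T2 ≤ degS J S := by
  have e1 : dBetween J S1 T1 ≤ dBetween J S1 Sᶜ :=
    dBetween_mono J (Finset.Subset.refl _) t1
  have e2 : dBetween J S2 T2 ≤ dBetween J S2 Sᶜ :=
    dBetween_mono J (Finset.Subset.refl _) t2
  have e3 : dBetween J S1 Sᶜ + dBetween J S2 Sᶜ = dBetween J (S1 ∪ S2) Sᶜ := by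
    unfold dBetween
    rw [Finset.sum_union hd]
  have e4 : dBetween J (S1 ∪ S2) Sᶜ ≤ dBetween J S Sᶜ :=
    dBetween_mono J (Finset.union_subset h1 h2) (Finset.Subset.refl _)
  unfold degS
  omega

/-- Lemma 3.8: if `1 ≤ |R(S)| ≤ |R(V \ S)|`, every inclusion-minimal member `R'` of `R(S)`
has `d_J(R' ∩ S, R' \ S) ≥ μ`, and a unique maximal member `R'` of `R(S)` (if one exists)
has `2 d_J((V \ R') ∩ S, (V \ R') \ S) ≥ k - 6`, then `d_J(S) ≥ k - 4`. -/
theorem degree_bound_overlapping_cut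
    (J : V → V → ℕ) (hJsymm : ∀ a b, J a b = J b a)
    (k : ℤ) (μ : ℤ) (hμ : μ = ⌈((k : ℚ) - 3) / 2⌉)
    (R : Finset (Finset V)) (hlam : LaminarF R) (S : Finset V)
    (h1 : 1 ≤ (overlapFam R S).card)
    (h2 : (overlapFam R S).card ≤ (overlapFam R Sᶜ).card)
    (hmin : ∀ A ∈ overlapFam R S, (∀ B ∈ overlapFam R S, ¬ B ⊂ A) →
      μ ≤ (dBetween J (A ∩ S) (A \ S) : ℤ))
    (hmax : ∀ A ∈ overlapFam R S, (∀ B ∈ overlapFam R S, B ⊆ A) →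
      k - 6 ≤ 2 * (dBetween J (Aᶜ ∩ S) (Aᶜ \ S) : ℤ)) :
    k - 4 ≤ (degS J S : ℤ) := by

  set F := overlapFam R S with hF
  have hFne : F.Nonempty := Finset.card_pos.mp h1
  have hmemR : ∀ A ∈ F, A ∈ R := fun A hA => (Finset.mem_filter.mp hA).1
  have hASne : ∀ A ∈ F, (A ∩ S).Nonempty := fun A hA => (Finset.mem_filter.mp hA).2.1
  have hsubS : ∀ A : Finset V, A ∩ S ⊆ S := fun A => Finset.inter_subset_right
  have hdiffS : ∀ A : Finset V, A \ S ⊆ Sᶜ := fun A v hv =>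
    Finset.mem_compl.mpr (Finset.mem_sdiff.mp hv).2
  have h2mu : k - 3 ≤ 2 * μ := by
    have hc : ((k : ℚ) - 3) / 2 ≤ (μ : ℚ) := by
      rw [hμ]; exact_mod_cast Int.le_ceil (((k : ℚ) - 3) / 2)
    have : (k : ℚ) - 3 ≤ 2 * (μ : ℚ) := by linarith
    exact_mod_cast this
  -- a minimal member of F
  obtain ⟨B, hBF, hBmin⟩ := (by obtain ⟨m, hm⟩ := Finset.exists_minimal hFne; exact ⟨m, hm.1, fun x hx hlt => hlt.not_ge (hm.2 hx hlt.le)⟩ : ∃ m ∈ F, ∀ x ∈ F, ¬ x < m)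
  have hBne : B.Nonempty := (hASne B hBF).mono Finset.inter_subset_left
  have hBd : μ ≤ (dBetween J (B ∩ S) (B \ S) : ℤ) := hmin B hBF hBmin
  by_cases hall : ∀ C ∈ F, B ⊆ C
  · -- chain case: unique maximal member containing everything
    obtain ⟨A, hAF, hAmax⟩ := (by obtain ⟨m, hm⟩ := Finset.exists_maximal hFne; exact ⟨m, hm.1, fun x hx hlt => hlt.not_ge (hm.2 hx hlt.le)⟩ : ∃ m ∈ F, ∀ x ∈ F, ¬ m < x)
    have hallA : ∀ C ∈ F, C ⊆ A := by
      intro C hC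
      rcases hlam C (hmemR C hC) A (hmemR A hAF) with hd | hCA | hAC
      · exfalso
        obtain ⟨b, hb⟩ := hBne
        exact Finset.notMem_empty b ((hd.mono (hall C hC) (hall A hAF)).le_bot (Finset.mem_inter.mpr ⟨hb, hb⟩))
      · exact hCA
      · rcases eq_or_ne A C with rfl | hne
        · exact Finset.Subset.refl _
        · exact absurd (lt_of_le_of_ne hAC hne) (hAmax C hC)
    have hMd : k - 6 ≤ 2 * (dBetween J (Aᶜ ∩ S) (Aᶜ \ S) : ℤ) := hmax A hAF hallA
    have hdisj : Disjoint (B ∩ S) (Aᶜ ∩ S) := by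
      have : Disjoint B Aᶜ :=
        Disjoint.mono_left (hall A hAF) disjoint_compl_right
      exact this.mono Finset.inter_subset_left Finset.inter_subset_left
    have hcut := two_cuts J (hsubS B) (hsubS Aᶜ) hdisj (hdiffS B) (hdiffS Aᶜ)
    have hcut' : (dBetween J (B ∩ S) (B \ S) : ℤ) + (dBetween J (Aᶜ ∩ S) (Aᶜ \ S) : ℤ)
        ≤ (degS J S : ℤ) := by exact_mod_cast hcut
    omega
  · -- two disjoint minimal members
    push_neg at hall
    obtain ⟨C, hCF, hBC⟩ := hall
    obtain ⟨B', hB'sub, hB'F, hB'min⟩ : ∃ B' , B' ⊆ C ∧ B' ∈ F ∧ ∀ D ∈ F, ¬ D ⊂ B' := by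
      obtain ⟨B', hB', hB'min⟩ := (by obtain ⟨m, hm⟩ := Finset.exists_minimal (s := F.filter (· ⊆ C)) ⟨C, Finset.mem_filter.mpr ⟨hCF, Finset.Subset.refl C⟩⟩; exact ⟨m, hm.1, fun x hx hlt => hlt.not_ge (hm.2 hx hlt.le)⟩ : ∃ m ∈ F.filter (· ⊆ C), ∀ x ∈ F.filter (· ⊆ C), ¬ x < m)
      simp only [Finset.mem_filter] at hB'
      exact ⟨B', hB'.2, hB'.1, fun D hD hDB => hB'min D
        (Finset.mem_filter.mpr ⟨hD, hDB.subset.trans hB'.2⟩) hDB⟩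
    have hne : B ≠ B' := fun h => hBC (h ▸ hB'sub)
    have hdisjBB : Disjoint B B' := by
      rcases hlam B (hmemR B hBF) B' (hmemR B' hB'F) with hd | h1' | h2'
      · exact hd
      · exact absurd (lt_of_le_of_ne h1' hne) (hB'min B hBF)
      · exact absurd (lt_of_le_of_ne h2' hne.symm) (hBmin B' hB'F)
    have hB'd : μ ≤ (dBetween J (B' ∩ S) (B' \ S) : ℤ) := hmin B' hB'F hB'min
    have hdisj : Disjoint (B ∩ S) (B' ∩ S) :=
      hdisjBB.mono Finset.inter_subset_left Finset.inter_subset_left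
    have hcut := two_cuts J (hsubS B) (hsubS B') hdisj (hdiffS B) (hdiffS B')
    have hcut' : (dBetween J (B ∩ S) (B \ S) : ℤ) + (dBetween J (B' ∩ S) (B' \ S) : ℤ)
        ≤ (degS J S : ℤ) := by exact_mod_cast hcut
    omega
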